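/- Good scales exist: Suppose Q: ℕ → (0,1] is nonincreasing with Q(i) = i^{-ρ + o(1)} as i → ∞ for some ρ ∈ (0, 1). Then there exists a constant c > 0 such that ℓ·Q(ℓ) ≥ c·∑_{i=1}^{ℓ-1} Q(i) holds for infinitely many integers ℓ. -/

import Mathlib

open Filter

/-- Good scales exist: if `Q : ℕ → (0,1]` is nonincreasing with `Q(i) = i^{-ρ+o(1)}`
for some `ρ ∈ (0,1)` (i.e. `log Q(i)/log i → -ρ`), then there is a constant `c > 0` such
that `ℓ·Q(ℓ) ≥ c·∑_{i=1}^{ℓ-1} Q(i)` for infinitely many integers `ℓ`. -/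
theorem good_scales_exist (ρ : ℝ) (hρ : ρ ∈ Set.Ioo (0 : ℝ) 1)
    (Q : ℕ → ℝ) (hpos : ∀ i, 0 < Q i) (hle1 : ∀ i, Q i ≤ 1)
    (hmono : ∀ i, Q (i + 1) ≤ Q i)
    (hasymp : Tendsto (fun i : ℕ => Real.log (Q i) / Real.log i) atTop (nhds (-ρ))) :
    ∃ c > 0, {ℓ : ℕ | c * ∑ i ∈ Finset.Icc 1 (ℓ - 1), Q i ≤ (ℓ : ℝ) * Q ℓ}.Infinite := by
  obtain ⟨hρ0, hρ1⟩ := hρ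
  set c : ℝ := (1 - ρ) / 4 with hc
  have hc0 : 0 < c := by rw [hc]; linarith
  have hc3 : 1 - (ρ + c) = 3 * c := by rw [hc]; ring
  refine ⟨c, hc0, ?_⟩
  clear_value c
  clear hc
  by_contra hfin
  rw [Set.not_infinite] at hfin
  -- anti-monotone Q
  have hanti : Antitone Q := antitone_nat_of_succ_le hmono
  set T : ℕ → ℝ := fun ℓ => ∑ i ∈ Finset.Icc 1 (ℓ - 1), Q i with hT
  -- from finiteness: ∃ N, ∀ ℓ ≥ N, ℓ * Q ℓ < c * T ℓ
  obtain ⟨N, hN⟩ := hfin.bddAbove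
  have hbig : ∀ ℓ, N + 1 ≤ ℓ → (ℓ : ℝ) * Q ℓ < c * T ℓ := by
    intro ℓ hℓ
    by_contra h
    push_neg at h
    have : ℓ ∈ {ℓ : ℕ | c * ∑ i ∈ Finset.Icc 1 (ℓ - 1), Q i ≤ (ℓ : ℝ) * Q ℓ} := h
    exact absurd (hN this) (by omega)
  -- from hasymp: eventually Q i ≥ i ^ (-(ρ + c))
  have hQlow : ∀ᶠ i : ℕ in atTop, (i : ℝ) ^ (-(ρ + c)) ≤ Q i := by
    have h1 : ∀ᶠ i : ℕ in atTop, -(ρ + c) < Real.log (Q i) / Real.log i :=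
      hasymp.eventually (eventually_gt_nhds (by linarith))
    filter_upwards [h1, eventually_ge_atTop 2] with i hi h2
    have hlogi : 0 < Real.log i := by
      apply Real.log_pos
      exact_mod_cast by omega
    have : -(ρ + c) * Real.log i < Real.log (Q i) := (lt_div_iff₀ hlogi).mp hi
    have hi0 : (0 : ℝ) < i := by exact_mod_cast by omega
    rw [Real.rpow_def_of_pos hi0]
    calc Real.exp (Real.log i * -(ρ + c)) ≤ Real.exp (Real.log (Q i)) :=
          Real.exp_le_exp.mpr (by linarith [mul_comm (Real.log i) (-(ρ + c))])
      _ = Q i := Real.exp_log (hpos i)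
  obtain ⟨N₂, hN₂⟩ := hQlow.exists_forall_of_atTop
  set N₀ : ℕ := max (max (N + 1) (N₂ + 1)) 2 with hN₀
  have hN₀2 : 2 ≤ N₀ := le_max_right _ _
  have hNle : N + 1 ≤ N₀ := le_trans (le_max_left _ _) (le_max_left _ _)
  have hN₂le : N₂ + 1 ≤ N₀ := le_trans (le_max_right _ _) (le_max_left _ _)
  -- recursion: T (ℓ+1) = T ℓ + Q ℓ for ℓ ≥ 1
  have hTsucc : ∀ ℓ : ℕ, 1 ≤ ℓ → T (ℓ + 1) = T ℓ + Q ℓ := by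
    intro ℓ hℓ
    have h : ℓ + 1 - 1 = (ℓ - 1) + 1 := by omega
    have h2 : ℓ - 1 + 1 = ℓ := by omega
    show ∑ i ∈ Finset.Icc 1 (ℓ + 1 - 1), Q i = (∑ i ∈ Finset.Icc 1 (ℓ - 1), Q i) + Q ℓ
    rw [h, Finset.sum_Icc_succ_top (by omega : 1 ≤ ℓ - 1 + 1), h2]
  have hTnonneg : ∀ ℓ, 0 ≤ T ℓ :=
    fun ℓ => Finset.sum_nonneg fun i _ => (hpos i).le
  -- key induction bound
  have hup : ∀ m : ℕ, T (N₀ + m) ≤ T N₀ * Real.exp (c * ∑ i ∈ Finset.Ico N₀ (N₀ + m), (1 : ℝ) / i) := by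
    intro m
    induction m with
    | zero => simp
    | succ m ih =>
      have hℓ : 1 ≤ N₀ + m := by omega
      have hℓN : N + 1 ≤ N₀ + m := by omega
      have hstep := hbig (N₀ + m) hℓN
      have hℓpos : (0 : ℝ) < (N₀ + m : ℕ) := by exact_mod_cast by omega
      have hQlt : Q (N₀ + m) ≤ c * T (N₀ + m) / (N₀ + m : ℕ) := by
        rw [le_div_iff₀ hℓpos]
        nlinarith [hstep]
      have h1 : T (N₀ + (m + 1)) ≤ T (N₀ + m) * (1 + c / (N₀ + m : ℕ)) := by
        rw [show N₀ + (m + 1) = (N₀ + m) + 1 by ring, hTsucc _ hℓ]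
        have heq : T (N₀ + m) * (1 + c / ((N₀ + m : ℕ) : ℝ))
            = T (N₀ + m) + c * T (N₀ + m) / ((N₀ + m : ℕ) : ℝ) := by ring
        rw [heq]
        linarith [hQlt]
      have h2 : (1 : ℝ) + c / (N₀ + m : ℕ) ≤ Real.exp (c / (N₀ + m : ℕ)) := by
        have := Real.add_one_le_exp (c / (N₀ + m : ℕ))
        linarith
      calc T (N₀ + (m + 1)) ≤ T (N₀ + m) * (1 + c / (N₀ + m : ℕ)) := h1
        _ ≤ (T N₀ * Real.exp (c * ∑ i ∈ Finset.Ico N₀ (N₀ + m), (1 : ℝ) / i)) * (1 + c / (N₀ + m : ℕ)) := by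
            apply mul_le_mul_of_nonneg_right ih
            have : (0:ℝ) ≤ c / ((N₀ + m : ℕ) : ℝ) := div_nonneg hc0.le hℓpos.le
            linarith
        _ ≤ (T N₀ * Real.exp (c * ∑ i ∈ Finset.Ico N₀ (N₀ + m), (1 : ℝ) / i)) * Real.exp (c / (N₀ + m : ℕ)) := by
            apply mul_le_mul_of_nonneg_left h2
            exact mul_nonneg (hTnonneg N₀) (Real.exp_nonneg _)
        _ = T N₀ * Real.exp (c * ∑ i ∈ Finset.Ico N₀ (N₀ + (m + 1)), (1 : ℝ) / i) := by
            rw [show N₀ + (m + 1) = (N₀ + m) + 1 by ring,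
              Finset.sum_Ico_succ_top (by omega)]
            rw [mul_assoc, ← Real.exp_add]
            congr 2
            ring
  -- bound the harmonic-type sum
  have hharm : ∀ ℓ : ℕ, 1 ≤ ℓ → (∑ i ∈ Finset.Ico N₀ ℓ, (1 : ℝ) / i) ≤ 1 + Real.log ℓ := by
    intro ℓ hℓ
    have hsub : Finset.Ico N₀ ℓ ⊆ Finset.Icc 1 ℓ := by
      intro x hx
      simp only [Finset.mem_Ico, Finset.mem_Icc] at *
      omega
    calc (∑ i ∈ Finset.Ico N₀ ℓ, (1 : ℝ) / i)
        ≤ ∑ i ∈ Finset.Icc 1 ℓ, (1 : ℝ) / i := by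
          apply Finset.sum_le_sum_of_subset_of_nonneg hsub
          intro i _ _
          positivity
      _ = (harmonic ℓ : ℝ) := by
          rw [harmonic_eq_sum_Icc]
          push_cast
          simp [one_div]
      _ ≤ 1 + Real.log ℓ := harmonic_le_one_add_log ℓ
  -- choose a large ℓ and get a contradiction
  set K : ℝ := T N₀ * Real.exp c * (2 : ℝ) ^ ((3 : ℝ) * c) with hK
  have htends : Tendsto (fun ℓ : ℕ => (ℓ : ℝ) ^ ((2 : ℝ) * c)) atTop atTop :=
    (tendsto_rpow_atTop (by linarith)).comp tendsto_natCast_atTop_atTop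
  obtain ⟨ℓ, hℓK, hℓN₀⟩ :=
    ((htends.eventually_gt_atTop K).and (eventually_ge_atTop (N₀ + 1))).exists
  -- lower bound on T ℓ
  have hℓ1 : 1 ≤ ℓ - 1 := by omega
  have hℓ1N₂ : N₂ ≤ ℓ - 1 := by omega
  have hℓ1pos : (0 : ℝ) < ((ℓ - 1 : ℕ) : ℝ) := by exact_mod_cast by omega
  have hlow : ((ℓ - 1 : ℕ) : ℝ) ^ ((3 : ℝ) * c) ≤ T ℓ := by
    have h1 : ∀ i ∈ Finset.Icc 1 (ℓ - 1), Q (ℓ - 1) ≤ Q i := by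
      intro i hi
      simp only [Finset.mem_Icc] at hi
      exact hanti hi.2
    have hcard : (Finset.Icc 1 (ℓ - 1)).card = ℓ - 1 := by
      rw [Nat.card_Icc]; omega
    have h2 : ((ℓ - 1 : ℕ) : ℝ) * Q (ℓ - 1) ≤ T ℓ := by
      have := Finset.card_nsmul_le_sum (Finset.Icc 1 (ℓ - 1)) Q (Q (ℓ - 1)) h1
      rw [hcard, nsmul_eq_mul] at this
      exact this
    have h3 : ((ℓ - 1 : ℕ) : ℝ) ^ (-(ρ + c)) ≤ Q (ℓ - 1) := hN₂ _ hℓ1N₂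
    calc ((ℓ - 1 : ℕ) : ℝ) ^ ((3 : ℝ) * c)
        = ((ℓ - 1 : ℕ) : ℝ) ^ ((1 : ℝ) + (-(ρ + c))) := by rw [← hc3]; ring_nf
      _ = ((ℓ - 1 : ℕ) : ℝ) * ((ℓ - 1 : ℕ) : ℝ) ^ (-(ρ + c)) := by
          rw [Real.rpow_add hℓ1pos, Real.rpow_one]
      _ ≤ ((ℓ - 1 : ℕ) : ℝ) * Q (ℓ - 1) := by
          apply mul_le_mul_of_nonneg_left h3 hℓ1pos.le
      _ ≤ T ℓ := h2
  -- upper bound on T ℓ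
  have hℓpos : (0 : ℝ) < (ℓ : ℝ) := by exact_mod_cast by omega
  have hupℓ : T ℓ ≤ T N₀ * Real.exp c * (ℓ : ℝ) ^ (c : ℝ) := by
    have := hup (ℓ - N₀)
    rw [show N₀ + (ℓ - N₀) = ℓ by omega] at this
    calc T ℓ ≤ T N₀ * Real.exp (c * ∑ i ∈ Finset.Ico N₀ ℓ, (1 : ℝ) / i) := this
      _ ≤ T N₀ * Real.exp (c * (1 + Real.log ℓ)) := by
          apply mul_le_mul_of_nonneg_left _ (hTnonneg N₀)
          apply Real.exp_le_exp.mpr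
          exact mul_le_mul_of_nonneg_left (hharm ℓ (by omega)) hc0.le
      _ = T N₀ * Real.exp c * (ℓ : ℝ) ^ (c : ℝ) := by
          rw [Real.rpow_def_of_pos hℓpos, mul_assoc, ← Real.exp_add]
          ring_nf
  -- (ℓ-1) ≥ ℓ/2
  have hhalf : (ℓ : ℝ) / 2 ≤ ((ℓ - 1 : ℕ) : ℝ) := by
    have : (2 : ℕ) ≤ ℓ := by omega
    have h : ((ℓ - 1 : ℕ) : ℝ) = (ℓ : ℝ) - 1 := by
      push_cast [Nat.cast_sub (by omega : 1 ≤ ℓ)]; ring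
    rw [h]
    have : (2 : ℝ) ≤ ℓ := by exact_mod_cast this
    linarith
  have hmain : ((ℓ : ℝ) / 2) ^ ((3 : ℝ) * c) ≤ T N₀ * Real.exp c * (ℓ : ℝ) ^ (c : ℝ) := by
    calc ((ℓ : ℝ) / 2) ^ ((3 : ℝ) * c) ≤ ((ℓ - 1 : ℕ) : ℝ) ^ ((3 : ℝ) * c) :=
          Real.rpow_le_rpow (by positivity) hhalf (by linarith)
      _ ≤ T ℓ := hlow
      _ ≤ _ := hupℓ
  -- derive contradiction: ℓ^{2c} ≤ K
  have hfinal : (ℓ : ℝ) ^ ((2 : ℝ) * c) ≤ K := by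
    have hdiv : ((ℓ : ℝ) / 2) ^ ((3 : ℝ) * c) = (ℓ : ℝ) ^ ((3 : ℝ) * c) / (2 : ℝ) ^ ((3 : ℝ) * c) :=
      Real.div_rpow hℓpos.le (by norm_num) _
    have hsplit : (ℓ : ℝ) ^ ((3 : ℝ) * c) = (ℓ : ℝ) ^ ((2 : ℝ) * c) * (ℓ : ℝ) ^ (c : ℝ) := by
      rw [← Real.rpow_add hℓpos]; ring_nf
    have h2pos : (0 : ℝ) < (2 : ℝ) ^ ((3 : ℝ) * c) := by positivity
    have hℓcpos : (0 : ℝ) < (ℓ : ℝ) ^ (c : ℝ) := by positivity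
    rw [hdiv, hsplit, div_le_iff₀ h2pos] at hmain
    have hm2 : (ℓ : ℝ) ^ ((2 : ℝ) * c) * (ℓ : ℝ) ^ (c : ℝ) ≤ K * (ℓ : ℝ) ^ (c : ℝ) := by
      rw [hK]; nlinarith [hmain]
    exact le_of_mul_le_mul_right hm2 hℓcpos
  exact absurd hfinal (not_le.mpr hℓK)
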